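/- Let n ≥ 1 and let λ ∈ ℕ^n be a nonzero multi-index. For all natural numbers p, q ≥ 0 with p + q + 1 = |λ|, there exist multi-indices λ', λ'' ∈ ℕ^n and an index ℓ ∈ {1,…,n} such that λ = λ' + λ'' + c_ℓ, |λ'| = p, |λ''| = q, and s_{λ'} · s_{λ''} ≤ e^{n³} · s_λ · |λ|^n. -/

import Mathlib

open Finset

/-- `s_λ = ∏_j (λ_j/|λ|)^{λ_j/2}` (real powers, with the conventions `0^0 = 1` and `s_0 = 1`). -/
noncomputable def sCoeff {n : ℕ} (lam : Fin n → ℕ) : ℝ :=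
  ∏ j, ((lam j : ℝ) / ((∑ i, lam i : ℕ) : ℝ)) ^ ((lam j : ℝ) / 2)

lemma rpow_eq_exp_of (x y : ℝ) (hx : 0 ≤ x) (h : x = 0 ∨ 0 < x) (hy : x = 0 → y = 0) :
    x ^ y = Real.exp (y * Real.log x) := by
  rcases h with h | h
  · subst h; rw [hy rfl]; simp
  · rw [Real.rpow_def_of_pos h, mul_comm]

lemma S_lemma (s lam m a : ℝ) (hm : 1 ≤ m)
    (hs : s = 0 ∨ 1 ≤ s) (ha : a = 0 ∨ 1 ≤ a) (hlam : lam = 0 ∨ 1 ≤ lam)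
    (hlm : lam ≤ m) (hsm : s ≤ m) (hal : a ≤ lam) (has : a ≤ s)
    (h1 : s * lam / m - 1 ≤ a) (h2 : a ≤ s * lam / m + 3) :
    a * Real.log (a / s) ≤ s / m * (lam * Real.log (lam / m)) + (Real.log m + 3) := by
  have hm0 : (0:ℝ) < m := lt_of_lt_of_le one_pos hm
  have hlogm : 0 ≤ Real.log m := Real.log_nonneg hm
  have hs0' : 0 ≤ s := by rcases hs with h | h <;> [simp [h]; linarith]
  rcases ha with ha | ha
  · subst ha
    simp only [zero_div, Real.log_zero, zero_mul]
    rcases hlam with h0 | h1lam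
    · subst h0; simp only [zero_mul, mul_zero]; linarith
    · have hl0 : (0:ℝ) < lam := by linarith
      have hsl : s * lam / m ≤ 1 := by linarith
      have hsl0 : 0 ≤ s * lam / m := by positivity
      have hll : Real.log (lam/m) ≤ 0 :=
        Real.log_nonpos (by positivity) (by rw [div_le_one hm0]; exact hlm)
      have hlg : -Real.log m ≤ Real.log (lam/m) := by
        rw [Real.log_div (ne_of_gt hl0) (ne_of_gt hm0)]
        have : 0 ≤ Real.log lam := Real.log_nonneg h1lam
        linarith
      have e1 : s/m*(lam*Real.log (lam/m)) = (s*lam/m) * Real.log (lam/m) := by ring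
      rw [e1]
      nlinarith [mul_le_mul_of_nonneg_left hlg hsl0]
  · have hs1 : 1 ≤ s := by
      rcases hs with h | h
      · linarith
      · exact h
    have hl1 : 1 ≤ lam := by
      rcases hlam with h | h
      · linarith
      · exact h
    have ha0 : 0 < a := by linarith
    have hsp : 0 < s := by linarith
    have hlp : 0 < lam := by linarith
    set α := s * lam / m with hα
    have hα0 : 0 < α := by positivity
    have hck : α * Real.log a ≤ α * Real.log α + (a - α) := by
      have h := Real.log_le_sub_one_of_pos (show 0 < a / α by positivity)
      rw [Real.log_div (ne_of_gt ha0) (ne_of_gt hα0)] at h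
      have h' := mul_le_mul_of_nonneg_left h (le_of_lt hα0)
      have hc : α * (a / α - 1) = a - α := by field_simp
      nlinarith [h']
    have hmain : a * Real.log (a/s) ≤ α * Real.log (α/s) + (Real.log (a/s) + 1) * (a - α) := by
      rw [Real.log_div (ne_of_gt ha0) (ne_of_gt hsp), Real.log_div (ne_of_gt hα0) (ne_of_gt hsp)]
      nlinarith [hck]
    have ht1 : Real.log (a/s) ≤ 0 :=
      Real.log_nonpos (by positivity) (by rw [div_le_one hsp]; exact has)
    have ht2 : -Real.log m ≤ Real.log (a/s) := by
      rw [Real.log_div (ne_of_gt ha0) (ne_of_gt hsp)]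
      have h1' : 0 ≤ Real.log a := Real.log_nonneg ha
      have h2' : Real.log s ≤ Real.log m := Real.log_le_log hsp hsm
      linarith
    have hd1 : -1 ≤ a - α := by simp only [hα] at h1 ⊢; linarith
    have hd2 : a - α ≤ 3 := by simp only [hα] at h2 ⊢; linarith
    have herr : (Real.log (a/s) + 1) * (a - α) ≤ Real.log m + 3 := by
      rcases le_or_gt 0 (Real.log (a/s) + 1) with h | h
      · nlinarith [mul_nonneg h (show (0:ℝ) ≤ 3 - (a - α) by linarith)]
      · nlinarith [mul_nonpos_of_nonpos_of_nonneg h.le (show (0:ℝ) ≤ (a - α) + 1 by linarith)]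
    have heq : α * Real.log (α/s) = s/m*(lam * Real.log (lam/m)) := by
      have hq : α / s = lam / m := by rw [hα]; field_simp
      rw [hq, hα]; ring
    rw [heq] at hmain
    linarith

lemma key_lemma (m p q a b lam : ℝ)
    (hm : 1 ≤ m) (hmpq : m ≤ p + q + 1)
    (hp : p = 0 ∨ 1 ≤ p) (hq : q = 0 ∨ 1 ≤ q)
    (ha : a = 0 ∨ 1 ≤ a) (hb : b = 0 ∨ 1 ≤ b) (hl : lam = 0 ∨ 1 ≤ lam)
    (hpm : p ≤ m) (hqm : q ≤ m) (hlm : lam ≤ m)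
    (hab : a + b ≤ lam) (hap : a ≤ p) (hbq : b ≤ q)
    (h1 : p * lam / m - 1 ≤ a) (h2 : a ≤ p * lam / m + 3)
    (h3 : q * lam / m - 1 ≤ b) (h4 : b ≤ q * lam / m + 3) :
    (a/p) ^ (a/2) * (b/q) ^ (b/2) ≤ Real.exp 4 * (m * (lam/m) ^ (lam/2)) := by
  have hm0 : (0:ℝ) < m := by linarith
  have ha0 : 0 ≤ a := by rcases ha with h | h <;> linarith [h]
  have hb0 : 0 ≤ b := by rcases hb with h | h <;> linarith [h]
  have hl0 : 0 ≤ lam := by rcases hl with h | h <;> linarith [h]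
  have hp0 : 0 ≤ p := by rcases hp with h | h <;> linarith [h]
  have hq0 : 0 ≤ q := by rcases hq with h | h <;> linarith [h]
  have ea : (a/p) ^ (a/2) = Real.exp (a/2 * Real.log (a/p)) := by
    rcases ha with h | h
    · subst h; simp
    · have hpp : (0:ℝ) < p := by linarith
      have : (0:ℝ) < a / p := by positivity
      rw [Real.rpow_def_of_pos this, mul_comm]
  have eb : (b/q) ^ (b/2) = Real.exp (b/2 * Real.log (b/q)) := by
    rcases hb with h | h
    · subst h; simp
    · have hqq : (0:ℝ) < q := by linarith
      have : (0:ℝ) < b / q := by positivity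
      rw [Real.rpow_def_of_pos this, mul_comm]
  have el : (lam/m) ^ (lam/2) = Real.exp (lam/2 * Real.log (lam/m)) := by
    rcases hl with h | h
    · subst h; simp
    · have : (0:ℝ) < lam / m := by positivity
      rw [Real.rpow_def_of_pos this, mul_comm]
  have hr : Real.exp 4 * (m * (lam/m) ^ (lam/2))
      = Real.exp (4 + Real.log m + lam/2 * Real.log (lam/m)) := by
    rw [Real.exp_add, Real.exp_add, Real.exp_log hm0, el, mul_assoc]
  rw [ea, eb, hr, ← Real.exp_add, Real.exp_le_exp]
  -- goal : a/2 * log(a/p) + b/2 * log(b/q) ≤ 4 + log m + lam/2 * log(lam/m)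
  have S1 := S_lemma p lam m a hm hp ha hl hlm hpm (by linarith) hap h1 h2
  have S2 := S_lemma q lam m b hm hq hb hl hlm hqm (by linarith) hbq h3 h4
  have hX : lam * Real.log (lam/m) ≤ 0 := by
    have hlog : Real.log (lam/m) ≤ 0 :=
      Real.log_nonpos (by positivity) (by rw [div_le_one hm0]; exact hlm)
    nlinarith
  have hXm : -(lam * Real.log (lam/m)) ≤ m := by
    rcases hl with h | h
    · rw [h]; simp; linarith
    · have hlp : (0:ℝ) < lam := by linarith
      have hlog := Real.log_le_sub_one_of_pos (show (0:ℝ) < m / lam by positivity)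
      have hli : Real.log (m/lam) = -Real.log (lam/m) := by
        rw [← Real.log_inv, inv_div]
      rw [hli] at hlog
      have hc : lam * (m / lam - 1) = m - lam := by field_simp
      nlinarith [mul_le_mul_of_nonneg_left hlog (le_of_lt hlp)]
  have hcomb : p/m * (lam * Real.log (lam/m)) + q/m * (lam * Real.log (lam/m))
      ≤ lam * Real.log (lam/m) + 1 := by
    set X := lam * Real.log (lam/m) with hXdef
    have hge : (m-1)/m ≤ p/m + q/m := by
      rw [← add_div, div_le_div_iff₀ hm0 hm0]
      nlinarith
    have h5 : (p/m + q/m) * X ≤ ((m-1)/m) * X := mul_le_mul_of_nonpos_right hge hX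
    have h6 : ((m-1)/m) * X = X - X/m := by field_simp
    have h7 : -X/m ≤ 1 := by
      rw [div_le_one hm0]; linarith
    have h8 : X - X/m ≤ X + 1 := by
      have : -(X/m) ≤ 1 := by rw [neg_div] at h7; exact h7
      linarith
    calc p/m * X + q/m * X = (p/m + q/m) * X := by ring
      _ ≤ ((m-1)/m) * X := h5
      _ = X - X/m := h6
      _ ≤ X + 1 := h8
  linarith [S1, S2, hcomb]

lemma exists_sub_sum {n : ℕ} (d : ℕ) (r : Fin n → ℕ) (h : d ≤ ∑ j, r j) :
    ∃ u : Fin n → ℕ, (∀ j, u j ≤ r j) ∧ ∑ j, u j = d := by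
  induction d with
  | zero => exact ⟨fun _ => 0, fun j => Nat.zero_le _, by simp⟩
  | succ d ih =>
    obtain ⟨u, hu, hsum⟩ := ih (by omega)
    have hex : ∃ j, u j < r j := by
      by_contra hc
      push_neg at hc
      have : ∑ j, r j ≤ ∑ j, u j := Finset.sum_le_sum (fun j _ => hc j)
      omega
    obtain ⟨j0, hj0⟩ := hex
    refine ⟨fun j => u j + if j = j0 then 1 else 0, fun j => ?_, ?_⟩
    · by_cases h' : j = j0
      · subst h'; simp; omega
      · simp [h']; exact hu j
    · rw [Finset.sum_add_distrib, hsum]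
      simp

lemma sum_eq_one_delta {n : ℕ} (w : Fin n → ℕ) (h : ∑ j, w j = 1) :
    ∃ ℓ : Fin n, ∀ j, w j = if j = ℓ then 1 else 0 := by
  have hex : ∃ ℓ, w ℓ ≠ 0 := by
    by_contra hc
    push_neg at hc
    simp only [hc, Finset.sum_const_zero] at h
    exact one_ne_zero h.symm
  obtain ⟨ℓ, hℓ⟩ := hex
  have h1 : w ℓ + ∑ j ∈ Finset.univ.erase ℓ, w j = 1 := by
    rw [Finset.add_sum_erase _ _ (Finset.mem_univ ℓ)]
    exact h
  have hz : ∑ j ∈ Finset.univ.erase ℓ, w j = 0 := by omega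
  refine ⟨ℓ, fun j => ?_⟩
  by_cases hj : j = ℓ
  · simp [hj]; omega
  · simp [hj]
    exact (Finset.sum_eq_zero_iff.mp hz) j (Finset.mem_erase.mpr ⟨hj, Finset.mem_univ j⟩)

lemma sum_div_le {n : ℕ} (f : Fin n → ℕ) (m : ℕ) (hm : 0 < m) :
    ∑ j, f j / m ≤ (∑ j, f j) / m := by
  rw [Nat.le_div_iff_mul_le hm, Finset.sum_mul]
  exact Finset.sum_le_sum fun j _ => Nat.div_mul_le_self _ _

lemma cast01 (k : ℕ) : (k:ℝ) = 0 ∨ 1 ≤ (k:ℝ) := by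
  rcases Nat.eq_zero_or_pos k with h | h
  · left; exact_mod_cast h
  · right; exact_mod_cast h

theorem case_one (lam : Fin 1 → ℕ)
    (p q : ℕ) (hpq : p + q + 1 = ∑ j, lam j) :
    ∃ (lam' lam'' : Fin 1 → ℕ) (ℓ : Fin 1),
      (∀ j, lam j = lam' j + lam'' j + (if j = ℓ then 1 else 0)) ∧
      (∑ j, lam' j) = p ∧ (∑ j, lam'' j) = q ∧
      sCoeff lam' * sCoeff lam'' ≤
        Real.exp ((1 : ℝ) ^ 3) * sCoeff lam * ((∑ j, lam j : ℕ) : ℝ) ^ 1 := by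
  have hm1 : lam 0 = p + q + 1 := by
    rw [Fin.sum_univ_one] at hpq; omega
  have hcoeff0 : ∀ k : ℕ, sCoeff (fun _ : Fin 1 => k) = 1 := by
    intro k
    rcases Nat.eq_zero_or_pos k with h | h
    · subst h
      simp [sCoeff]
    · simp only [sCoeff, Fin.sum_univ_one, Fin.prod_univ_one]
      rw [div_self (by exact_mod_cast h.ne' : (k:ℝ) ≠ 0), Real.one_rpow]
  have hle : lam = fun _ : Fin 1 => lam 0 := by
    funext j; rw [Subsingleton.elim j 0]
  refine ⟨fun _ => p, fun _ => q, 0, ?_, by simp, by simp, ?_⟩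
  · intro j
    have hj : j = 0 := Subsingleton.elim j 0
    subst hj
    simp [hm1]
  · rw [hcoeff0 p, hcoeff0 q, hle, hcoeff0 (lam 0)]
    simp only [one_mul, mul_one, Fin.sum_univ_one, pow_one]
    have h1 : (1:ℝ) ≤ Real.exp (1^3) := by
      rw [one_pow]
      nlinarith [Real.add_one_le_exp (1:ℝ)]
    have h2 : (1:ℝ) ≤ (lam 0 : ℝ) := by
      have : 1 ≤ lam 0 := by omega
      exact_mod_cast this
    nlinarith

set_option maxHeartbeats 2000000 in
theorem case_ge_two (n : ℕ) (hn2 : 1 < n) (lam : Fin n → ℕ)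
    (p q : ℕ) (hpq : p + q + 1 = ∑ j, lam j) :
    ∃ (lam' lam'' : Fin n → ℕ) (ℓ : Fin n),
      (∀ j, lam j = lam' j + lam'' j + (if j = ℓ then 1 else 0)) ∧
      (∑ j, lam' j) = p ∧ (∑ j, lam'' j) = q ∧
      sCoeff lam' * sCoeff lam'' ≤
        Real.exp ((n : ℝ) ^ 3) * sCoeff lam * ((∑ j, lam j : ℕ) : ℝ) ^ n := by
  set m := ∑ j, lam j with hmdef
  have hm : p + q + 1 = m := hpq
  have hm0 : 0 < m := by omega
  set a0 : Fin n → ℕ := fun j => p * lam j / m with ha0def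
  set b0 : Fin n → ℕ := fun j => q * lam j / m with hb0def
  have hab0 : ∀ j, a0 j + b0 j ≤ lam j := by
    intro j
    have h1 : a0 j + b0 j ≤ (p * lam j + q * lam j) / m := by
      rw [Nat.le_div_iff_mul_le hm0, add_mul]
      exact Nat.add_le_add (Nat.div_mul_le_self _ _) (Nat.div_mul_le_self _ _)
    have h2 : (p * lam j + q * lam j) / m ≤ lam j := by
      calc (p * lam j + q * lam j) / m = ((p + q) * lam j) / m := by ring_nf
        _ ≤ (m * lam j) / m := Nat.div_le_div_right (Nat.mul_le_mul_right _ (by omega))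
        _ = lam j := Nat.mul_div_cancel_left _ hm0
    omega
  set r : Fin n → ℕ := fun j => lam j - a0 j - b0 j with hrdef
  have hr : ∀ j, a0 j + b0 j + r j = lam j := by
    intro j
    have := hab0 j
    simp only [hrdef]
    omega
  have hsa0 : ∑ j, a0 j ≤ p := by
    calc ∑ j, a0 j ≤ (∑ j, p * lam j) / m := sum_div_le _ _ hm0
      _ = p := by rw [← Finset.mul_sum, ← hmdef, Nat.mul_div_cancel _ hm0]
  have hsb0 : ∑ j, b0 j ≤ q := by
    calc ∑ j, b0 j ≤ (∑ j, q * lam j) / m := sum_div_le _ _ hm0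
      _ = q := by rw [← Finset.mul_sum, ← hmdef, Nat.mul_div_cancel _ hm0]
  have hS : ∑ j, a0 j + ∑ j, b0 j + ∑ j, r j = m := by
    rw [← Finset.sum_add_distrib, ← Finset.sum_add_distrib]
    rw [hmdef]
    exact Finset.sum_congr rfl fun j _ => hr j
  obtain ⟨u, hu, husum⟩ := exists_sub_sum (p - ∑ j, a0 j) r (by omega)
  set r2 : Fin n → ℕ := fun j => r j - u j with hr2def
  have hr2 : ∀ j, r2 j + u j = r j := by
    intro j; have := hu j; simp only [hr2def]; omega
  have hr2sum : ∑ j, r2 j = (q - ∑ j, b0 j) + 1 := by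
    have h := Finset.sum_congr rfl (fun j (_ : j ∈ Finset.univ) => hr2 j)
    rw [Finset.sum_add_distrib] at h
    have hbr : Finset.univ.sum r = ∑ j, r j := rfl
    have hbr2 : Finset.univ.sum r2 = ∑ j, r2 j := rfl
    have hbu : Finset.univ.sum u = ∑ j, u j := rfl
    omega
  obtain ⟨v, hv, hvsum⟩ := exists_sub_sum (q - ∑ j, b0 j) r2
    (by have hbr2 : Finset.univ.sum r2 = ∑ j, r2 j := rfl; omega)
  set w : Fin n → ℕ := fun j => r2 j - v j with hwdef
  have hw : ∀ j, w j + v j = r2 j := by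
    intro j; have := hv j; simp only [hwdef]; omega
  have hwsum : ∑ j, w j = 1 := by
    have h := Finset.sum_congr rfl (fun j (_ : j ∈ Finset.univ) => hw j)
    rw [Finset.sum_add_distrib] at h
    have hbr2 : Finset.univ.sum r2 = ∑ j, r2 j := rfl
    have hbw : Finset.univ.sum w = ∑ j, w j := rfl
    have hbv : Finset.univ.sum v = ∑ j, v j := rfl
    omega
  obtain ⟨ℓ, hℓ⟩ := sum_eq_one_delta w hwsum
  set lam' : Fin n → ℕ := fun j => a0 j + u j with hl'def
  set lam'' : Fin n → ℕ := fun j => b0 j + v j with hl''def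
  have hdecomp : ∀ j, lam j = lam' j + lam'' j + (if j = ℓ then 1 else 0) := by
    intro j
    rw [← hℓ j]
    have h1 := hr j
    have h2 := hr2 j
    have h3 := hw j
    simp only [hl'def, hl''def]
    omega
  have hsum' : ∑ j, lam' j = p := by
    simp only [hl'def]
    rw [Finset.sum_add_distrib, husum]
    omega
  have hsum'' : ∑ j, lam'' j = q := by
    simp only [hl''def]
    rw [Finset.sum_add_distrib, hvsum]
    omega
  refine ⟨lam', lam'', ℓ, hdecomp, hsum', hsum'', ?_⟩
  have hmR : (1:ℝ) ≤ (m:ℝ) := by exact_mod_cast hm0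
  have hm0R : (0:ℝ) < (m:ℝ) := by linarith
  have hmeqR : (m:ℝ) = (p:ℝ) + (q:ℝ) + 1 := by exact_mod_cast hm.symm
  have key : ∀ j, ((lam' j : ℝ)/(p:ℝ))^((lam' j:ℝ)/2) * ((lam'' j:ℝ)/(q:ℝ))^((lam'' j:ℝ)/2)
      ≤ Real.exp ((n:ℝ)^2) * ((m:ℝ) * (((lam j:ℝ))/(m:ℝ))^((lam j:ℝ)/2)) := by
    intro j
    have hlmj : lam j ≤ m := by
      rw [hmdef]; exact Finset.single_le_sum (fun i _ => Nat.zero_le _) (Finset.mem_univ j)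
    have hapj : lam' j ≤ p := by
      rw [← hsum']; exact Finset.single_le_sum (fun i _ => Nat.zero_le _) (Finset.mem_univ j)
    have hbqj : lam'' j ≤ q := by
      rw [← hsum'']; exact Finset.single_le_sum (fun i _ => Nat.zero_le _) (Finset.mem_univ j)
    have habj : lam' j + lam'' j ≤ lam j := by
      have h := hdecomp j
      by_cases hc : j = ℓ
      · rw [if_pos hc] at h; omega
      · rw [if_neg hc] at h; omega
    have g1 : lam' j + b0 j ≤ lam j := by
      have h1 := hr j; have h2 := hu j; simp only [hl'def]; omega
    have g2 : lam'' j + a0 j ≤ lam j := by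
      have h1 := hr j; have h2 := hv j; have h3 := hr2 j; simp only [hl''def]; omega
    have la : a0 j ≤ lam' j := by simp only [hl'def]; omega
    have lb : b0 j ≤ lam'' j := by simp only [hl''def]; omega
    have ha0j : a0 j = p * lam j / m := rfl
    have hb0j : b0 j = q * lam j / m := rfl
    have dm1 := Nat.div_add_mod (p * lam j) m
    have md1 := Nat.mod_lt (p * lam j) hm0
    have dm2 := Nat.div_add_mod (q * lam j) m
    have md2 := Nat.mod_lt (q * lam j) hm0
    have dm1R : (m:ℝ) * ((a0 j : ℕ):ℝ) + ((p * lam j % m : ℕ):ℝ) = (p:ℝ) * (lam j:ℝ) := by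
      rw [ha0j]; exact_mod_cast dm1
    have md1R : ((p * lam j % m : ℕ):ℝ) ≤ (m:ℝ) - 1 := by
      rw [le_sub_iff_add_le]
      exact_mod_cast md1
    have dm2R : (m:ℝ) * ((b0 j : ℕ):ℝ) + ((q * lam j % m : ℕ):ℝ) = (q:ℝ) * (lam j:ℝ) := by
      rw [hb0j]; exact_mod_cast dm2
    have md2R : ((q * lam j % m : ℕ):ℝ) ≤ (m:ℝ) - 1 := by
      rw [le_sub_iff_add_le]
      exact_mod_cast md2
    have g1R : (lam' j:ℝ) + (b0 j:ℝ) ≤ (lam j:ℝ) := by exact_mod_cast g1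
    have g2R : (lam'' j:ℝ) + (a0 j:ℝ) ≤ (lam j:ℝ) := by exact_mod_cast g2
    have laR : ((a0 j:ℕ):ℝ) ≤ (lam' j:ℝ) := by exact_mod_cast la
    have lbR : ((b0 j:ℕ):ℝ) ≤ (lam'' j:ℝ) := by exact_mod_cast lb
    have hlmjR : (lam j:ℝ) ≤ (m:ℝ) := by exact_mod_cast hlmj
    have hprod : (lam j:ℝ) * (m:ℝ) = (p:ℝ) * lam j + (q:ℝ) * lam j + lam j := by
      rw [hmeqR]; ring
    have hmod1nn : (0:ℝ) ≤ ((p * lam j % m : ℕ):ℝ) := Nat.cast_nonneg _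
    have hmod2nn : (0:ℝ) ≤ ((q * lam j % m : ℕ):ℝ) := Nat.cast_nonneg _
    have fA2 : (p:ℝ) * (lam j:ℝ) / m - 1 ≤ ((a0 j:ℕ):ℝ) := by
      rw [sub_le_iff_le_add, div_le_iff₀ hm0R]
      linarith
    have fB2 : (q:ℝ) * (lam j:ℝ) / m - 1 ≤ ((b0 j:ℕ):ℝ) := by
      rw [sub_le_iff_le_add, div_le_iff₀ hm0R]
      linarith
    have k1 : (p:ℝ) * (lam j:ℝ) / m - 1 ≤ (lam' j:ℝ) := by linarith
    have k3 : (q:ℝ) * (lam j:ℝ) / m - 1 ≤ (lam'' j:ℝ) := by linarith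
    have k2 : (lam' j:ℝ) ≤ (p:ℝ) * (lam j:ℝ) / m + 3 := by
      rw [show (p:ℝ) * (lam j:ℝ) / m + 3 = ((p:ℝ) * lam j + 3*m)/m by field_simp]
      rw [le_div_iff₀ hm0R]
      have hmul := mul_le_mul_of_nonneg_right g1R hm0R.le
      linarith [hmul, dm2R, md2R, hprod, hlmjR]
    have k4 : (lam'' j:ℝ) ≤ (q:ℝ) * (lam j:ℝ) / m + 3 := by
      rw [show (q:ℝ) * (lam j:ℝ) / m + 3 = ((q:ℝ) * lam j + 3*m)/m by field_simp]
      rw [le_div_iff₀ hm0R]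
      have hmul := mul_le_mul_of_nonneg_right g2R hm0R.le
      linarith [hmul, dm1R, md1R, hprod, hlmjR]
    have hkey := key_lemma (m:ℝ) (p:ℝ) (q:ℝ) ((lam' j:ℕ):ℝ) ((lam'' j:ℕ):ℝ) ((lam j:ℕ):ℝ)
      hmR (le_of_eq hmeqR) (cast01 p) (cast01 q) (cast01 (lam' j)) (cast01 (lam'' j))
      (cast01 (lam j))
      (by exact_mod_cast (show p ≤ m by omega)) (by exact_mod_cast (show q ≤ m by omega))
      hlmjR
      (by exact_mod_cast habj) (by exact_mod_cast hapj) (by exact_mod_cast hbqj)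
      k1 k2 k3 k4
    have hexp : Real.exp 4 ≤ Real.exp ((n:ℝ)^2) := by
      apply Real.exp_le_exp.mpr
      have h2n : (2:ℝ) ≤ (n:ℝ) := by exact_mod_cast hn2
      nlinarith
    calc ((lam' j : ℝ)/(p:ℝ))^((lam' j:ℝ)/2) * ((lam'' j:ℝ)/(q:ℝ))^((lam'' j:ℝ)/2)
        ≤ Real.exp 4 * ((m:ℝ) * ((lam j:ℝ)/(m:ℝ))^((lam j:ℝ)/2)) := hkey
      _ ≤ Real.exp ((n:ℝ)^2) * ((m:ℝ) * ((lam j:ℝ)/(m:ℝ))^((lam j:ℝ)/2)) :=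
        mul_le_mul_of_nonneg_right hexp (by positivity)
  have hL : sCoeff lam' * sCoeff lam'' =
      ∏ j, (((lam' j:ℝ)/(p:ℝ))^((lam' j:ℝ)/2) * ((lam'' j:ℝ)/(q:ℝ))^((lam'' j:ℝ)/2)) := by
    unfold sCoeff
    rw [hsum', hsum'', ← Finset.prod_mul_distrib]
  have hR : sCoeff lam = ∏ j, ((lam j:ℝ)/(m:ℝ))^((lam j:ℝ)/2) := by
    unfold sCoeff
    rw [← hmdef]
  rw [hL]
  calc ∏ j, (((lam' j:ℝ)/(p:ℝ))^((lam' j:ℝ)/2) * ((lam'' j:ℝ)/(q:ℝ))^((lam'' j:ℝ)/2))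
      ≤ ∏ j, (Real.exp ((n:ℝ)^2) * ((m:ℝ) * ((lam j:ℝ)/(m:ℝ))^((lam j:ℝ)/2))) :=
        Finset.prod_le_prod (fun j _ => by positivity) (fun j _ => key j)
    _ = ∏ j, ((Real.exp ((n:ℝ)^2) * (m:ℝ)) * ((lam j:ℝ)/(m:ℝ))^((lam j:ℝ)/2)) := by
        apply Finset.prod_congr rfl; intros; ring
    _ = (Real.exp ((n:ℝ)^2) * (m:ℝ))^n * ∏ j, ((lam j:ℝ)/(m:ℝ))^((lam j:ℝ)/2) := by
        rw [Finset.prod_mul_distrib, Finset.prod_const, Finset.card_univ, Fintype.card_fin]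
    _ = Real.exp ((n:ℝ)^3) * sCoeff lam * ((m:ℕ):ℝ)^n := by
        rw [hR, mul_pow, ← Real.exp_nat_mul]
        have : (n:ℝ) * (n:ℝ)^2 = (n:ℝ)^3 := by ring
        rw [this]
        ring


/-- **good splittings of multi-indices.** Let `n ≥ 1` and let `λ ∈ ℕⁿ` be a
nonzero multi-index. For all `p, q ∈ ℕ` with `p + q + 1 = |λ|`, there exist multi-indices
`λ', λ'' ∈ ℕⁿ` and an index `ℓ` such that `λ = λ' + λ'' + c_ℓ`, `|λ'| = p`, `|λ''| = q`, and
`s_{λ'} · s_{λ''} ≤ e^{n³} · s_λ · |λ|ⁿ`. -/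
theorem multiindex_splitting (n : ℕ) (hn : 1 ≤ n) (lam : Fin n → ℕ) (hlam : lam ≠ 0)
    (p q : ℕ) (hpq : p + q + 1 = ∑ j, lam j) :
    ∃ (lam' lam'' : Fin n → ℕ) (ℓ : Fin n),
      (∀ j, lam j = lam' j + lam'' j + (if j = ℓ then 1 else 0)) ∧
      (∑ j, lam' j) = p ∧ (∑ j, lam'' j) = q ∧
      sCoeff lam' * sCoeff lam'' ≤
        Real.exp ((n : ℝ) ^ 3) * sCoeff lam * ((∑ j, lam j : ℕ) : ℝ) ^ n := by
  rcases eq_or_lt_of_le hn with h1 | hn2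
  · subst h1
    exact_mod_cast case_one lam p q hpq
  · exact case_ge_two n hn2 lam p q hpq
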